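/- Let m = 1, let A be an n×n row-stochastic matrix, fix constants c > 0, M > 0 and β ∈ (1/2, 1), and consider the diffusion Robbins–Monro algorithm with L_{k,i} = (k+1)^{-β} φ_{k,i}/(1+φ_{k,i}²), where θ_{0,i} = 0 for all i, φ_{k,i} = √(2c) for all k and i, and the noises satisfy ε_{k,i} = ε_{k,1} for all i, with {ε_{k,1}}_{k≥0} independent, Eε_{k,1} = 0 and Eε_{k,1}² = M. Then liminf_{k→∞} k^β E‖Θ̃_k‖² ≥ nM/(2+4c). -/

import Mathlib

open MeasureTheory Filter BigOperators Matrix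

set_option maxHeartbeats 1000000

lemma RM_analysis (r L β : ℝ) (hr : 0 < r) (hL : 0 < L)
    (hβ1 : 1/2 < β) (hβ2 : β < 1) (v : ℕ → ℝ) (hv0 : ∀ k, 0 ≤ v k)
    (hrec : ∀ k : ℕ, v (k+1) = (1 - r/((k:ℝ)+1)^β)^2 * v k + 2*r*L/(((k:ℝ)+1)^β)^2) :
    ∀ δ : ℝ, 0 < δ → ∀ᶠ k : ℕ in atTop, L - δ ≤ (k:ℝ)^β * v k := by
  have hβ0 : 0 < β := by linarith
  intro δ hδ
  by_cases hLδ : L - δ ≤ 0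
  · filter_upwards with k
    exact le_trans hLδ (mul_nonneg (Real.rpow_nonneg (Nat.cast_nonneg k) β) (hv0 k))
  push_neg at hLδ
  have hδL : δ < L := by linarith
  set η : ℝ := δ/(2*L) with hηdef
  have hη : 0 < η := div_pos hδ (by linarith)
  set C : ℝ := 2*r*(1+η) with hCdef
  have hC : 0 < C := by positivity
  set α : ℕ → ℝ := fun l => C/((l:ℝ)+1)^β with hαdef
  have hp : ∀ l : ℕ, (0:ℝ) < ((l:ℝ)+1)^β := fun l =>
    Real.rpow_pos_of_pos (by positivity) β
  have hα_pos : ∀ l, 0 < α l := fun l => div_pos hC (hp l)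
  set T : ℝ := L - δ/2 with hTdef
  have hT : 0 < T := by simp only [hTdef]; linarith
  set u : ℕ → ℝ := fun k => (k:ℝ)^β * v k with hudef
  have hu0 : ∀ k, 0 ≤ u k := fun k =>
    mul_nonneg (Real.rpow_nonneg (Nat.cast_nonneg k) β) (hv0 k)
  -- key step inequality
  have hstep : ∀ k : ℕ, 1 ≤ k → (1 - α k) * u k + α k * T ≤ u (k+1) := by
    intro k hk
    have hq : (0:ℝ) < (k:ℝ)^β := Real.rpow_pos_of_pos (by exact_mod_cast hk) β
    have hqp : (k:ℝ)^β ≤ ((k:ℝ)+1)^β := by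
      apply Real.rpow_le_rpow (Nat.cast_nonneg k) (by linarith) hβ0.le
    have hcast : ((k+1 : ℕ):ℝ) = (k:ℝ)+1 := by push_cast; ring
    have hu1 : u (k+1) = ((k:ℝ)+1)^β * ((1 - r/((k:ℝ)+1)^β)^2 * v k) + 2*r*L/((k:ℝ)+1)^β := by
      simp only [hudef, hcast, hrec k]
      field_simp
    have h1 : (1 - α k) * u k ≤ (k:ℝ)^β * ((1 - 2*r/((k:ℝ)+1)^β) * v k) := by
      have : (1 - α k) ≤ 1 - 2*r/((k:ℝ)+1)^β := by
        have : 2*r/((k:ℝ)+1)^β ≤ α k := by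
          simp only [hαdef]
          apply (div_le_div_iff_of_pos_right (hp k)).mpr
          simp only [hCdef]; nlinarith
        linarith
      calc (1 - α k) * u k ≤ (1 - 2*r/((k:ℝ)+1)^β) * u k := by
            apply mul_le_mul_of_nonneg_right this (hu0 k)
        _ = (k:ℝ)^β * ((1 - 2*r/((k:ℝ)+1)^β) * v k) := by simp only [hudef]; ring
    have h2 : (k:ℝ)^β * ((1 - 2*r/((k:ℝ)+1)^β) * v k)
        ≤ ((k:ℝ)+1)^β * ((1 - r/((k:ℝ)+1)^β)^2 * v k) := by
      have hsq : (1 - 2*r/((k:ℝ)+1)^β) ≤ (1 - r/((k:ℝ)+1)^β)^2 := by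
        have := sq_nonneg (r/((k:ℝ)+1)^β)
        have hexp : 2*r/((k:ℝ)+1)^β = 2*(r/((k:ℝ)+1)^β) := by ring
        rw [hexp]; nlinarith
      calc (k:ℝ)^β * ((1 - 2*r/((k:ℝ)+1)^β) * v k)
          ≤ (k:ℝ)^β * ((1 - r/((k:ℝ)+1)^β)^2 * v k) := by
            apply mul_le_mul_of_nonneg_left ?_ hq.le
            exact mul_le_mul_of_nonneg_right hsq (hv0 k)
        _ ≤ ((k:ℝ)+1)^β * ((1 - r/((k:ℝ)+1)^β)^2 * v k) := by
            exact mul_le_mul_of_nonneg_right hqp (mul_nonneg (sq_nonneg _) (hv0 k))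
    have h3 : α k * T ≤ 2*r*L/((k:ℝ)+1)^β := by
      have key : C * T ≤ 2*r*L := by
        have hη2 : η * L = δ/2 := by
          simp only [hηdef]; field_simp
        have hη3 : 0 ≤ η * (δ/2) := mul_nonneg hη.le (by linarith)
        have : (1+η)*T ≤ L := by
          simp only [hTdef]; nlinarith
        calc C * T = 2*r*((1+η)*T) := by simp only [hCdef]; ring
          _ ≤ 2*r*L := by nlinarith
      calc α k * T = C*T/((k:ℝ)+1)^β := by simp only [hαdef]; ring
        _ ≤ 2*r*L/((k:ℝ)+1)^β := (div_le_div_iff_of_pos_right (hp k)).mpr key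
    rw [hu1]
    linarith
  -- α tends to 0
  have hα_to0 : Tendsto α atTop (nhds 0) := by
    have h1 : Tendsto (fun l : ℕ => ((l:ℝ)+1)^β) atTop atTop := by
      apply (tendsto_rpow_atTop hβ0).comp
      exact tendsto_atTop_add_const_right atTop 1 tendsto_natCast_atTop_atTop
    simpa [hαdef] using (tendsto_const_nhds : Tendsto (fun _ : ℕ => C) atTop (nhds C)).div_atTop h1
  obtain ⟨K₀, hK₀⟩ := (hα_to0.eventually (eventually_le_nhds (by norm_num : (0:ℝ) < 1))).exists_forall_of_atTop
  set K := max K₀ 1 with hKdef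
  have hK1 : 1 ≤ K := le_max_right _ _
  have hαle1 : ∀ l, K ≤ l → α l ≤ 1 := fun l hl => hK₀ l (le_trans (le_max_left _ _) hl)
  -- divergence of partial sums of α
  have hnotsum : ¬ Summable α := by
    intro hs
    have h2 : Summable (fun l : ℕ => 1/((l:ℝ)+1)^β) := by
      have := hs.div_const C
      convert this using 2 with l
      · rfl
      simp only [hαdef]
      rw [div_right_comm, div_self hC.ne']
    have h3 : Summable (fun l : ℕ => 1/((l:ℝ))^β) := by
      rw [← summable_nat_add_iff 1]
      convert h2 using 2 with l
      · rfl
      push_cast; ring_nf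
    rw [Real.summable_one_div_nat_rpow] at h3
    linarith
  have hsum_div : Tendsto (fun k => ∑ l ∈ Finset.range k, α l) atTop atTop :=
    (not_summable_iff_tendsto_nat_atTop_of_nonneg (fun l => (hα_pos l).le)).mp hnotsum
  have hIco_div : Tendsto (fun k => ∑ l ∈ Finset.Ico K k, α l) atTop atTop := by
    apply Tendsto.congr' ?_ (hsum_div.atTop_add tendsto_const_nhds (C := -(∑ l ∈ Finset.range K, α l)))
    filter_upwards [eventually_ge_atTop K] with k hk
    rw [Finset.sum_Ico_eq_sub _ hk]; ring
  -- contraction estimate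
  have hz : ∀ k, K ≤ k → T - u k ≤ (∏ l ∈ Finset.Ico K k, (1 - α l)) * (T - u K) := by
    intro k hk
    induction k, hk using Nat.le_induction with
    | base => simp
    | succ k hk ih =>
      have hα1 : α k ≤ 1 := hαle1 k hk
      have hprod_nonneg : 0 ≤ ∏ l ∈ Finset.Ico K k, (1 - α l) := by
        apply Finset.prod_nonneg
        intro l hl
        have := hαle1 l (Finset.mem_Ico.mp hl).1
        linarith
      have hstep' := hstep k (le_trans hK1 hk)
      calc T - u (k+1) ≤ (1 - α k) * (T - u k) := by nlinarith
        _ ≤ (1 - α k) * ((∏ l ∈ Finset.Ico K k, (1 - α l)) * (T - u K)) := by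
            apply mul_le_mul_of_nonneg_left ih (by linarith)
        _ = (∏ l ∈ Finset.Ico K (k+1), (1 - α l)) * (T - u K) := by
            rw [Finset.prod_Ico_succ_top hk]; ring
  -- product bounded by exponential
  have hprodle : ∀ k, K ≤ k → (∏ l ∈ Finset.Ico K k, (1 - α l)) * (T - u K)
      ≤ Real.exp (-(∑ l ∈ Finset.Ico K k, α l)) * max (T - u K) 0 := by
    intro k hk
    have hprod_nonneg : 0 ≤ ∏ l ∈ Finset.Ico K k, (1 - α l) := by
      apply Finset.prod_nonneg
      intro l hl
      have := hαle1 l (Finset.mem_Ico.mp hl).1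
      linarith
    have h1 : (∏ l ∈ Finset.Ico K k, (1 - α l)) * (T - u K)
        ≤ (∏ l ∈ Finset.Ico K k, (1 - α l)) * max (T - u K) 0 :=
      mul_le_mul_of_nonneg_left (le_max_left _ _) hprod_nonneg
    have h2 : (∏ l ∈ Finset.Ico K k, (1 - α l)) ≤ Real.exp (-(∑ l ∈ Finset.Ico K k, α l)) := by
      calc (∏ l ∈ Finset.Ico K k, (1 - α l)) ≤ ∏ l ∈ Finset.Ico K k, Real.exp (-(α l)) := by
            apply Finset.prod_le_prod
            · intro l hl
              have := hαle1 l (Finset.mem_Ico.mp hl).1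
              linarith
            · intro l hl
              have := Real.add_one_le_exp (-(α l))
              linarith
        _ = Real.exp (∑ l ∈ Finset.Ico K k, -(α l)) := (Real.exp_sum _ _).symm
        _ = Real.exp (-(∑ l ∈ Finset.Ico K k, α l)) := by rw [Finset.sum_neg_distrib]
    calc (∏ l ∈ Finset.Ico K k, (1 - α l)) * (T - u K) ≤ _ := h1
      _ ≤ Real.exp (-(∑ l ∈ Finset.Ico K k, α l)) * max (T - u K) 0 :=
          mul_le_mul_of_nonneg_right h2 (le_max_right _ _)
  -- exp term tends to 0
  have hexp0 : Tendsto (fun k => Real.exp (-(∑ l ∈ Finset.Ico K k, α l)) * max (T - u K) 0)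
      atTop (nhds 0) := by
    have h1 : Tendsto (fun k => -(∑ l ∈ Finset.Ico K k, α l)) atTop atBot :=
      tendsto_neg_atTop_atBot.comp hIco_div
    simpa using (Real.tendsto_exp_atBot.comp h1).mul_const (max (T - u K) 0)
  have hfin : ∀ᶠ k in atTop, Real.exp (-(∑ l ∈ Finset.Ico K k, α l)) * max (T - u K) 0 ≤ δ/2 := by
    exact hexp0.eventually_le_const (by linarith)
  filter_upwards [eventually_ge_atTop K, hfin] with k hk hk2
  have := le_trans (hz k hk) (le_trans (hprodle k hk) hk2)
  simp only [hudef, hTdef] at this ⊢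
  linarith



/-- **Remark (tightness of the mean-square rate of the diffusion Robbins–Monro
algorithm).**  Let `m = 1`, let `A` be row-stochastic, fix `c > 0`, `M > 0` and
`β ∈ (1/2, 1)`, and run the diffusion Robbins–Monro algorithm with gains
`L_{k,i} = (k+1)^{-β} φ_{k,i}/(1+φ_{k,i}²)`, zero initial estimates,
regressors `φ_{k,i} = √(2c)` and noises `ε_{k,i} = ε_{k,1}` for all `i`, where
`{ε_{k,1}}` are independent with mean `0` and variance `M`.  Then
`liminf_{k→∞} k^β E‖Θ̃_k‖² ≥ nM/(2+4c)`
(`liminf ≥ L` is expressed as: for every `δ > 0`, eventually `≥ L − δ`). -/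
theorem diffusion_RM_rate_lower_bound_example
    {n : ℕ} (hn : 1 ≤ n)
    (A : Matrix (Fin n) (Fin n) ℝ)
    (hA_nonneg : ∀ i j, 0 ≤ A i j)
    (hA_row : ∀ i, ∑ j, A i j = 1)
    {Ω : Type} [MeasurableSpace Ω] (P : Measure Ω) [IsProbabilityMeasure P]
    (ε : ℕ → Ω → ℝ)
    (hε_meas : ∀ k, Measurable (ε k))
    (hε_L2 : ∀ k, MemLp (ε k) 2 P)
    (hε_indep : ProbabilityTheory.iIndepFun ε P)
    (c M : ℝ) (hc : 0 < c) (hM : 0 < M)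
    (hε_mean : ∀ k, ∫ ω, ε k ω ∂P = 0)
    (hε_var : ∀ k, ∫ ω, (ε k ω) ^ 2 ∂P = M)
    (β : ℝ) (hβ : 1 / 2 < β ∧ β < 1)
    (θ : ℝ)
    (θe : ℕ → Fin n → Ω → ℝ)
    (hinit : ∀ i ω, θe 0 i ω = 0)
    (hrec : ∀ k i ω, θe (k + 1) i ω =
      ∑ j, A i j * (θe k j ω +
        ((1 / ((k : ℝ) + 1) ^ β) * Real.sqrt (2 * c) / (1 + 2 * c)) *
          ((θ * Real.sqrt (2 * c) + ε k ω) - θe k j ω * Real.sqrt (2 * c)))) :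
    ∀ δ : ℝ, 0 < δ → ∀ᶠ k : ℕ in atTop,
      (n : ℝ) * M / (2 + 4 * c) - δ
        ≤ (k : ℝ) ^ β * ∫ ω, ∑ i, (θe k i ω - θ) ^ 2 ∂P := by
  obtain ⟨hβ1, hβ2⟩ := hβ
  have h2c : (0:ℝ) < 2*c := by linarith
  have hsq2c : Real.sqrt (2*c) * Real.sqrt (2*c) = 2*c := Real.mul_self_sqrt h2c.le
  have h12c : (0:ℝ) < 1 + 2*c := by linarith
  set g : ℕ → ℝ := fun k => (1 / ((k:ℝ) + 1) ^ β) * Real.sqrt (2*c) / (1 + 2*c) with hgdef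
  set a : ℕ → ℝ := fun k => (1 / ((k:ℝ) + 1) ^ β) * (2*c) / (1 + 2*c) with hadef
  have hp : ∀ l : ℕ, (0:ℝ) < ((l:ℝ)+1)^β := fun l => Real.rpow_pos_of_pos (by positivity) β
  have hag : ∀ k, g k * Real.sqrt (2*c) = a k := by
    intro k
    simp only [hgdef, hadef]
    rw [div_mul_eq_mul_div, mul_assoc, hsq2c]
  set co : ℕ → ℕ → ℝ := fun k j => g j * ∏ l ∈ Finset.Ico (j+1) k, (1 - a l) with hcodef
  set Pr : ℕ → ℝ := fun k => ∏ l ∈ Finset.range k, (1 - a l) with hPrdef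
  -- deterministic identity
  have hid : ∀ k (i : Fin n) ω,
      θe k i ω = (∑ j ∈ Finset.range k, co k j * ε j ω) + θ * (1 - Pr k) := by
    intro k
    induction k with
    | zero => intro i ω; simp [hinit i ω, hPrdef]
    | succ k ih =>
      intro i ω
      have hsum : ∑ j ∈ Finset.range (k+1), co (k+1) j * ε j ω
          = (1 - a k) * (∑ j ∈ Finset.range k, co k j * ε j ω) + g k * ε k ω := by
        rw [Finset.sum_range_succ, Finset.mul_sum]
        congr 1
        · apply Finset.sum_congr rfl
          intro j hj
          have hjk : j + 1 ≤ k := Finset.mem_range.mp hj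
          simp only [hcodef]
          rw [Finset.prod_Ico_succ_top hjk]
          ring
        · simp only [hcodef, Finset.Ico_self, Finset.prod_empty, mul_one]
      have hPrs : Pr (k+1) = Pr k * (1 - a k) := by
        simp only [hPrdef, Finset.prod_range_succ]
      rw [hrec k i ω]
      have hE : ∀ j : Fin n,
          A i j * (θe k j ω +
            ((1 / ((k : ℝ) + 1) ^ β) * Real.sqrt (2 * c) / (1 + 2 * c)) *
              ((θ * Real.sqrt (2 * c) + ε k ω) - θe k j ω * Real.sqrt (2 * c)))
          = A i j * ((∑ j ∈ Finset.range (k+1), co (k+1) j * ε j ω) + θ * (1 - Pr (k+1))) := by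
        intro j
        rw [ih j ω]
        have hgk : (1 / ((k : ℝ) + 1) ^ β) * Real.sqrt (2 * c) / (1 + 2 * c) = g k := rfl
        rw [hgk, hsum, hPrs]
        have hag' := hag k
        congr 1
        linear_combination (θ * Pr k - ∑ j ∈ Finset.range k, co k j * ε j ω) * hag'
      rw [Finset.sum_congr rfl (fun j _ => hE j), ← Finset.sum_mul, hA_row i, one_mul]
  -- covariance facts
  have hεint : ∀ j, Integrable (ε j) P := fun j => (hε_L2 j).integrable one_le_two
  have hint : ∀ j j' : ℕ, Integrable (fun ω => ε j ω * ε j' ω) P := by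
    intro j j'
    rcases eq_or_ne j j' with h | h
    · subst h
      have := (hε_L2 j).integrable_sq
      simpa [pow_two] using this
    · exact (hε_indep.indepFun h).integrable_mul (hεint j) (hεint j')
  have hcov : ∀ j j' : ℕ, ∫ ω, ε j ω * ε j' ω ∂P = if j = j' then M else 0 := by
    intro j j'
    rcases eq_or_ne j j' with h | h
    · subst h
      simp only [if_pos rfl]
      rw [← hε_var j]
      congr 1; funext ω; ring
    · rw [if_neg h]
      have h0 : ∫ ω, ε j ω * ε j' ω ∂P = (∫ ω, ε j ω ∂P) * ∫ ω, ε j' ω ∂P :=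
        (hε_indep.indepFun h).integral_fun_mul_eq_mul_integral (hε_meas j).aestronglyMeasurable
          (hε_meas j').aestronglyMeasurable
      rw [h0, hε_mean j, hε_mean j', mul_zero]
  -- second moment of linear combinations
  have hvar : ∀ (k : ℕ) (d : ℕ → ℝ) (b : ℝ),
      ∫ ω, ((∑ j ∈ Finset.range k, d j * ε j ω) - b)^2 ∂P
        = M * ∑ j ∈ Finset.range k, (d j)^2 + b^2 := by
    intro k d b
    have hexpand : ∀ ω : Ω, ((∑ j ∈ Finset.range k, d j * ε j ω) - b)^2
        = (∑ j ∈ Finset.range k, ∑ j' ∈ Finset.range k, (d j * d j') * (ε j ω * ε j' ω))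
          + ((∑ j ∈ Finset.range k, (-2*b*d j) * ε j ω) + b^2) := by
      intro ω
      have h1 : ((∑ j ∈ Finset.range k, d j * ε j ω) - b)^2
          = (∑ j ∈ Finset.range k, d j * ε j ω) * (∑ j' ∈ Finset.range k, d j' * ε j' ω)
            + ((-2*b) * (∑ j ∈ Finset.range k, d j * ε j ω) + b^2) := by ring
      rw [h1, Finset.sum_mul_sum, Finset.mul_sum]
      congr 1
      · apply Finset.sum_congr rfl; intro j _
        apply Finset.sum_congr rfl; intro j' _
        ring
      · congr 1
        apply Finset.sum_congr rfl; intro j _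
        ring
    have hA_int : Integrable (fun ω => ∑ j ∈ Finset.range k, ∑ j' ∈ Finset.range k,
        (d j * d j') * (ε j ω * ε j' ω)) P := by
      apply integrable_finset_sum
      intro j _
      apply integrable_finset_sum
      intro j' _
      exact (hint j j').const_mul _
    have hB_int : Integrable (fun ω => (∑ j ∈ Finset.range k, (-2*b*d j) * ε j ω) + b^2) P := by
      apply Integrable.add ?_ (integrable_const _)
      apply integrable_finset_sum
      intro j _
      exact (hεint j).const_mul _
    simp only [hexpand]
    rw [integral_add hA_int hB_int]
    have hAval : ∫ ω, (∑ j ∈ Finset.range k, ∑ j' ∈ Finset.range k,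
        (d j * d j') * (ε j ω * ε j' ω)) ∂P = M * ∑ j ∈ Finset.range k, (d j)^2 := by
      rw [integral_finset_sum _ (fun j _ => integrable_finset_sum _
        (fun j' _ => (hint j j').const_mul _))]
      rw [Finset.mul_sum]
      apply Finset.sum_congr rfl
      intro j hj
      rw [integral_finset_sum _ (fun j' _ => (hint j j').const_mul _)]
      rw [Finset.sum_eq_single_of_mem j hj]
      · rw [integral_const_mul, hcov j j, if_pos rfl]; ring
      · intro j' _ hne
        rw [integral_const_mul, hcov j j', if_neg (Ne.symm hne), mul_zero]
    have hBval : ∫ ω, ((∑ j ∈ Finset.range k, (-2*b*d j) * ε j ω) + b^2) ∂P = b^2 := by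
      rw [integral_add (integrable_finset_sum _ (fun j _ => (hεint j).const_mul _))
        (integrable_const _)]
      rw [integral_finset_sum _ (fun j _ => (hεint j).const_mul _)]
      simp only [integral_const_mul, hε_mean, mul_zero, Finset.sum_const_zero, zero_add]
      simp
    rw [hAval, hBval]
  -- the variance sequence
  set v : ℕ → ℝ := fun k => M * ∑ j ∈ Finset.range k, (co k j)^2 + (θ * Pr k)^2 with hvdef
  have hv0 : ∀ k, 0 ≤ v k := by
    intro k
    have h1 : (0:ℝ) ≤ ∑ j ∈ Finset.range k, (co k j)^2 :=
      Finset.sum_nonneg fun j _ => sq_nonneg _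
    simp only [hvdef]
    nlinarith [sq_nonneg (θ * Pr k), mul_nonneg hM.le h1]
  set rr : ℝ := 2*c/(1+2*c) with hrrdef
  set LL : ℝ := M/(2+4*c) with hLLdef
  have hrr : 0 < rr := by positivity
  have hLL : 0 < LL := by positivity
  have hvrec : ∀ k : ℕ, v (k+1) = (1 - rr/((k:ℝ)+1)^β)^2 * v k + 2*rr*LL/(((k:ℝ)+1)^β)^2 := by
    intro k
    have hak : a k = rr/((k:ℝ)+1)^β := by
      simp only [hadef, hrrdef]
      field_simp
    have hgk2 : M * (g k)^2 = 2*rr*LL/(((k:ℝ)+1)^β)^2 := by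
      simp only [hgdef, hrrdef, hLLdef]
      rw [div_pow, mul_pow, Real.sq_sqrt h2c.le]
      field_simp
      ring
    have hsum : ∑ j ∈ Finset.range (k+1), (co (k+1) j)^2
        = (1 - a k)^2 * ∑ j ∈ Finset.range k, (co k j)^2 + (g k)^2 := by
      rw [Finset.sum_range_succ, Finset.mul_sum]
      congr 1
      · apply Finset.sum_congr rfl
        intro j hj
        have hjk : j + 1 ≤ k := Finset.mem_range.mp hj
        simp only [hcodef]
        rw [Finset.prod_Ico_succ_top hjk]
        ring
      · simp only [hcodef, Finset.Ico_self, Finset.prod_empty, mul_one]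
    have hPrs : Pr (k+1) = Pr k * (1 - a k) := by
      simp only [hPrdef, Finset.prod_range_succ]
    rw [← hak, ← hgk2]
    simp only [hvdef, hsum, hPrs]
    ring
  intro δ hδ
  have hn' : (0:ℝ) < (n:ℝ) := by exact_mod_cast hn
  have hmain := RM_analysis rr LL β hrr hLL hβ1 hβ2 v hv0 hvrec (δ/n) (by positivity)
  filter_upwards [hmain] with k hk
  -- compute the integral
  have hintval : ∫ ω, ∑ i, (θe k i ω - θ)^2 ∂P = (n:ℝ) * v k := by
    have hpt : ∀ ω : Ω, ∑ i : Fin n, (θe k i ω - θ)^2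
        = (n:ℝ) * ((∑ j ∈ Finset.range k, co k j * ε j ω) - θ * Pr k)^2 := by
      intro ω
      have : ∀ i : Fin n, (θe k i ω - θ)^2
          = ((∑ j ∈ Finset.range k, co k j * ε j ω) - θ * Pr k)^2 := by
        intro i
        rw [hid k i ω]
        ring
      rw [Finset.sum_congr rfl (fun i _ => this i)]
      simp [Finset.sum_const, Finset.card_univ, nsmul_eq_mul]
    simp only [hpt]
    rw [integral_const_mul, hvar k (co k) (θ * Pr k)]
  rw [hintval]
  have h1 : (n:ℝ) * (LL - δ/n) ≤ (n:ℝ) * ((k:ℝ)^β * v k) :=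
    mul_le_mul_of_nonneg_left hk hn'.le
  have h2 : (n:ℝ) * (LL - δ/n) = (n:ℝ) * M / (2+4*c) - δ := by
    simp only [hLLdef]
    field_simp
  linarith [h1]
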